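/- For r = 2 and all integers m ≥ n ≥ 1, card(Ĥ²_{m,n}) = ∑_{i=0}^{m−1} (−1)^i binom(n−i−1, i) C_{m−i−1}. -/

import Mathlib

open scoped Classical

/-- For a binary string `ε` of length `N`, `D2 ε j` is
`#{i ≤ j : ε_i = 0} − #{i ≤ j : ε_i = 1}` over the first `j` entries. -/
def D2 {N : ℕ} (ε : Fin N → Fin 2) (j : ℕ) : ℤ :=
  ((Finset.univ.filter fun i : Fin N => (i : ℕ) < j ∧ ε i = 0).card : ℤ) -
    ((Finset.univ.filter fun i : Fin N => (i : ℕ) < j ∧ ε i = 1).card : ℤ)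

/-- `ε` encodes a leading hump of order `m`: `D_j ≥ 0` for all `j ≤ 2m`,
`D_{2m} = 0`, and `ε_j = 1` whenever `D_j = 0`. -/
def IsLeadingHump (m : ℕ) (ε : Fin (2 * m) → Fin 2) : Prop :=
  (∀ j, 1 ≤ j → j ≤ 2 * m → 0 ≤ D2 ε j) ∧ D2 ε (2 * m) = 0 ∧
    ∀ j (hj : 1 ≤ j) (hj' : j ≤ 2 * m), D2 ε j = 0 → ε ⟨j - 1, by omega⟩ = 1

/-- `Ĥ²_{m,n}`: the set of binary strings of length `2m` encoding leading
humps of order `m` and generation `n`. -/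
noncomputable def H2 (m n : ℕ) : Finset (Fin (2 * m) → Fin 2) :=
  Finset.univ.filter fun ε => IsLeadingHump m ε ∧
    ((Finset.Icc 1 (2 * m)).filter fun j => D2 ε j = 0).card = n

open DyckStep List

namespace DyckWord

/-- Number of returns to zero of a Dyck word. -/
def rets (p : DyckWord) : ℕ :=
  if h : p = 0 then 0 else
    have := semilength_outsidePart_lt h
    rets p.outsidePart + 1
termination_by p.semilength

@[simp] lemma rets_zero : rets 0 = 0 := by rw [rets]; simp

lemma rets_of_ne {p : DyckWord} (h : p ≠ 0) : rets p = rets p.outsidePart + 1 := by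
  rw [rets]; simp [h]

lemma rets_eq_zero_iff {p : DyckWord} : rets p = 0 ↔ p = 0 := by
  constructor
  · intro h; by_contra hp; rw [rets_of_ne hp] at h; omega
  · rintro rfl; simp

lemma rets_nest_add (q r : DyckWord) : rets (q.nest + r) = rets r + 1 := by
  have h : q.nest + r ≠ 0 := by
    intro h
    rw [add_eq_zero'] at h
    exact nest_ne_zero h.1
  rw [rets_of_ne h, outsidePart_add nest_ne_zero, outsidePart_nest, zero_add]

lemma rets_nest (q : DyckWord) : rets q.nest = 1 := by
  have := rets_nest_add q 0
  simpa using this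

/-- Number of nonempty balanced prefixes of a Dyck word. -/
def bal (p : DyckWord) : ℕ :=
  ((Finset.Icc 1 p.toList.length).filter fun j =>
    (p.toList.take j).count U = (p.toList.take j).count D).card

@[simp] lemma bal_zero : bal 0 = 0 := by
  have : (0 : DyckWord).toList = [] := rfl
  simp [bal, this]

lemma bal_nest_add (q r : DyckWord) : bal (q.nest + r) = bal r + 1 := by
  classical
  set a := q.nest.toList with ha
  set b := r.toList with hb
  have hab : (q.nest + r).toList = a ++ b := rfl
  set L := a.length with hL
  have hL1 : 1 ≤ L := by
    have : a ≠ [] := toList_ne_nil.mpr nest_ne_zero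
    have := length_pos_of_ne_nil this
    omega
  have habal : a.count U = a.count D := q.nest.count_U_eq_count_D
  have hstrict : ∀ j, 0 < j → j < L → (a.take j).count D < (a.take j).count U :=
    fun j h1 h2 => (IsNested.nest (p := q)).2 h1 h2
  have key : ((Finset.Icc 1 (a ++ b).length).filter fun j =>
      ((a ++ b).take j).count U = ((a ++ b).take j).count D) =
      insert L (((Finset.Icc 1 b.length).filter fun j =>
        (b.take j).count U = (b.take j).count D).image fun t => L + t) := by
    ext j
    simp only [Finset.mem_insert, Finset.mem_image, Finset.mem_filter, Finset.mem_Icc,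
      length_append]
    constructor
    · rintro ⟨⟨hj1, hj2⟩, hj3⟩
      rcases lt_trichotomy j L with hlt | rfl | hgt
      · exfalso
        rw [take_append_of_le_length (by omega)] at hj3
        exact absurd hj3 (hstrict j (by omega) hlt).ne'
      · exact Or.inl rfl
      · refine Or.inr ⟨j - L, ⟨⟨by omega, by omega⟩, ?_⟩, by omega⟩
        have : j = L + (j - L) := by omega
        rw [this, take_append] at hj3
        rw [count_append, count_append, take_of_length_le (show a.length ≤ L + (j - L) by omega),
          show L + (j - L) - a.length = j - L by omega, habal] at hj3
        omega
    · rintro (rfl | ⟨t, ⟨⟨ht1, ht2⟩, ht3⟩, rfl⟩)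
      · refine ⟨⟨by omega, by omega⟩, ?_⟩
        rw [take_append_of_le_length (le_refl L), take_of_length_le (le_refl L)]
        exact habal
      · refine ⟨⟨by omega, by omega⟩, ?_⟩
        rw [take_append, count_append, count_append, take_of_length_le (show a.length ≤ L + t by omega),
          show L + t - a.length = t by omega, habal, ht3]
  rw [bal, hab, key, Finset.card_insert_of_notMem, Finset.card_image_of_injective _
    (add_right_injective L), add_comm]
  · rw [bal, ← hb]; omega
  · simp only [Finset.mem_image, Finset.mem_filter, Finset.mem_Icc]
    rintro ⟨t, ⟨⟨ht1, _⟩, _⟩, ht⟩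
    omega

lemma bal_eq_rets (p : DyckWord) : bal p = rets p := by
  by_cases h : p = 0
  · subst h; simp
  · have hd := nest_insidePart_add_outsidePart h
    have hlt := semilength_outsidePart_lt h
    calc bal p = bal (p.insidePart.nest + p.outsidePart) := by rw [hd]
    _ = bal p.outsidePart + 1 := bal_nest_add _ _
    _ = rets p.outsidePart + 1 := by rw [bal_eq_rets p.outsidePart]
    _ = rets p := (rets_of_ne h).symm
termination_by p.semilength

end DyckWord

lemma count_take_ofFn {N : ℕ} (g : Fin N → DyckStep) (s : DyckStep) (j : ℕ) :
    (((List.ofFn g).take j).count s) =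
      (Finset.univ.filter fun i : Fin N => (i : ℕ) < j ∧ g i = s).card := by
  classical
  induction j with
  | zero => simp
  | succ j ih =>
    by_cases hj : j < N
    · have hstep : (List.ofFn g).take (j + 1) = (List.ofFn g).take j ++ [g ⟨j, hj⟩] := by
        rw [List.take_succ]
        congr 1
        rw [List.getElem?_eq_getElem (by simpa using hj)]
        simp [List.getElem_ofFn]
      rw [hstep, count_append, ih]
      have hsplit : (Finset.univ.filter fun i : Fin N => (i : ℕ) < j + 1 ∧ g i = s) =
          (Finset.univ.filter fun i : Fin N => (i : ℕ) < j ∧ g i = s) ∪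
          (Finset.univ.filter fun i : Fin N => i = ⟨j, hj⟩ ∧ g i = s) := by
        ext i
        simp only [Finset.mem_filter, Finset.mem_union, Finset.mem_univ, true_and]
        constructor
        · rintro ⟨h1, h2⟩
          rcases Nat.lt_or_ge (i : ℕ) j with h | h
          · exact Or.inl ⟨h, h2⟩
          · exact Or.inr ⟨Fin.ext (by simp only [Fin.val_mk]; omega), h2⟩
        · rintro (⟨h1, h2⟩ | ⟨rfl, h2⟩)
          · exact ⟨by omega, h2⟩
          · exact ⟨by simp, h2⟩
      rw [hsplit, Finset.card_union_of_disjoint]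
      · congr 1
        by_cases hs : g ⟨j, hj⟩ = s
        · rw [show (Finset.univ.filter fun i : Fin N => i = ⟨j, hj⟩ ∧ g i = s) = {⟨j, hj⟩} by
            ext i
            simp only [Finset.mem_filter, Finset.mem_univ, true_and, Finset.mem_singleton]
            constructor
            · rintro ⟨rfl, -⟩; rfl
            · rintro rfl; exact ⟨rfl, hs⟩]
          simp [hs]
        · rw [show (Finset.univ.filter fun i : Fin N => i = ⟨j, hj⟩ ∧ g i = s) = ∅ by
            ext i
            simp only [Finset.mem_filter, Finset.mem_univ, true_and, Finset.notMem_empty,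
              iff_false, not_and]
            rintro rfl; exact hs]
          simp [count_singleton', hs]
      · rw [Finset.disjoint_left]
        rintro i hi hi2
        simp only [Finset.mem_filter] at hi hi2
        obtain ⟨-, h1, -⟩ := hi
        obtain ⟨-, rfl, -⟩ := hi2
        simp only [Fin.val_mk] at h1
        omega
    · have h1 : (List.ofFn g).take (j + 1) = (List.ofFn g).take j := by
        rw [take_of_length_le (by simp; omega), take_of_length_le (by simp; omega)]
      rw [h1, ih]
      congr 1
      apply Finset.filter_congr
      intro i _
      have := i.isLt
      constructor <;> (rintro ⟨h, h2⟩; exact ⟨by omega, h2⟩)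

/-- The Dyck-step word encoded by a binary string. -/
def wordOf {N : ℕ} (ε : Fin N → Fin 2) : List DyckStep :=
  List.ofFn fun i => if ε i = 0 then U else D

lemma fin2_cases (x : Fin 2) : x = 0 ∨ x = 1 := by omega

lemma fin2_ne_zero {x : Fin 2} : x ≠ 0 ↔ x = 1 := by omega

@[simp] lemma wordOf_length {N : ℕ} (ε : Fin N → Fin 2) : (wordOf ε).length = N := by
  simp [wordOf]

lemma D2_eq_counts {N : ℕ} (ε : Fin N → Fin 2) (j : ℕ) :
    D2 ε j = (((wordOf ε).take j).count U : ℤ) - (((wordOf ε).take j).count D : ℤ) := by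
  rw [D2, wordOf, count_take_ofFn, count_take_ofFn]
  have h1 : (Finset.univ.filter fun i : Fin N => (i : ℕ) < j ∧ ε i = 0) =
      Finset.univ.filter fun i : Fin N => (i : ℕ) < j ∧ (if ε i = 0 then U else D) = U := by
    apply Finset.filter_congr
    intro i _
    constructor
    · rintro ⟨hh1, hh2⟩; exact ⟨hh1, by simp [hh2]⟩
    · rintro ⟨hh1, hh2⟩
      refine ⟨hh1, ?_⟩
      by_contra hc
      simp [hc] at hh2
  have h2 : (Finset.univ.filter fun i : Fin N => (i : ℕ) < j ∧ ε i = 1) =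
      Finset.univ.filter fun i : Fin N => (i : ℕ) < j ∧ (if ε i = 0 then U else D) = D := by
    apply Finset.filter_congr
    intro i _
    constructor
    · rintro ⟨hh1, hh2⟩
      refine ⟨hh1, ?_⟩
      rw [show ε i = 1 from hh2]
      simp
    · rintro ⟨hh1, hh2⟩
      refine ⟨hh1, ?_⟩
      rcases fin2_cases (ε i) with h | h
      · simp [h] at hh2
      · exact h
  rw [h1, h2]

@[simp] lemma D2_zero_eq {N : ℕ} (ε : Fin N → Fin 2) : D2 ε 0 = 0 := by
  simp [D2]

lemma mem_H2_iff {m n : ℕ} (ε : Fin (2 * m) → Fin 2) : ε ∈ H2 m n ↔ IsLeadingHump m ε ∧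
    ((Finset.Icc 1 (2 * m)).filter fun j => D2 ε j = 0).card = n := by
  simp [H2]

/-- The Dyck word associated to a nonnegative balanced binary string. -/
def dyckOf {m : ℕ} (ε : Fin (2 * m) → Fin 2)
    (h1 : ∀ j, 1 ≤ j → j ≤ 2 * m → 0 ≤ D2 ε j) (h2 : D2 ε (2 * m) = 0) : DyckWord where
  toList := wordOf ε
  count_U_eq_count_D := by
    have h := D2_eq_counts ε (2 * m)
    rw [take_of_length_le (by simp), h2] at h
    omega
  count_D_le_count_U i := by
    by_cases hi : i ≤ 2 * m
    · rcases Nat.eq_zero_or_pos i with rfl | hpos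
      · simp
      · have h := h1 i hpos hi
        rw [D2_eq_counts] at h
        omega
    · have heq : (wordOf ε).take i = (wordOf ε).take (2 * m) := by
        rw [take_of_length_le (by simp; omega), take_of_length_le (by simp)]
      have h := D2_eq_counts ε (2 * m)
      rw [h2] at h
      rw [heq]
      omega

@[simp] lemma dyckOf_toList {m : ℕ} (ε : Fin (2 * m) → Fin 2) (h1) (h2) :
    (dyckOf ε h1 h2).toList = wordOf ε := rfl

lemma dyckOf_semilength {m : ℕ} (ε : Fin (2 * m) → Fin 2) (h1) (h2) :
    (dyckOf ε h1 h2).semilength = m := by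
  have h := (dyckOf ε h1 h2).two_mul_semilength_eq_length
  rw [dyckOf_toList, wordOf_length] at h
  omega

/-- The binary string associated to a Dyck word of semilength `m`. -/
def epsOf {m : ℕ} (p : DyckWord) (hsl : p.semilength = m) : Fin (2 * m) → Fin 2 :=
  fun i => if p.toList[(i : ℕ)]'(by rw [← p.two_mul_semilength_eq_length, hsl]; exact i.isLt) = U
    then 0 else 1

lemma wordOf_epsOf {m : ℕ} (p : DyckWord) (hsl : p.semilength = m) :
    wordOf (epsOf p hsl) = p.toList := by
  have hlen : p.toList.length = 2 * m := by rw [← p.two_mul_semilength_eq_length, hsl]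
  apply List.ext_getElem
  · simp [hlen]
  · intro i hi1 hi2
    simp only [wordOf, List.getElem_ofFn, epsOf]
    rcases (p.toList[i]'hi2).dichotomy with h | h <;> simp [h]

lemma card_D2_zero_eq_bal {m : ℕ} (ε : Fin (2 * m) → Fin 2) (p : DyckWord)
    (hw : wordOf ε = p.toList) :
    ((Finset.Icc 1 (2 * m)).filter fun j => D2 ε j = 0).card = p.bal := by
  have hlen : p.toList.length = 2 * m := by rw [← hw]; simp
  rw [DyckWord.bal, hlen]
  apply congrArg
  apply Finset.filter_congr
  intro j _
  have h := D2_eq_counts ε j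
  rw [hw] at h
  constructor
  · intro hh; omega
  · intro hh; omega

lemma third_of_first {m : ℕ} (ε : Fin (2 * m) → Fin 2)
    (h1 : ∀ j, 1 ≤ j → j ≤ 2 * m → 0 ≤ D2 ε j) :
    ∀ j (hj : 1 ≤ j) (hj' : j ≤ 2 * m), D2 ε j = 0 → ε ⟨j - 1, by omega⟩ = 1 := by
  intro j hj hj' h0
  by_contra hc
  have hz : ε ⟨j - 1, by omega⟩ = 0 := by
    rcases fin2_cases (ε ⟨j - 1, by omega⟩) with h | h
    · exact h
    · exact absurd h hc
  have hjm : j - 1 < 2 * m := by omega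
  have hstep : (wordOf ε).take j = (wordOf ε).take (j - 1) ++ [U] := by
    have hj2 : j = (j - 1) + 1 := by omega
    rw [hj2, List.take_succ]
    congr 1
    rw [List.getElem?_eq_getElem (by simpa using hjm)]
    simp only [wordOf, List.getElem_ofFn, Option.toList_some]
    rw [show (⟨j - 1, by simpa using hjm⟩ : Fin (2 * m)) = ⟨j - 1, by omega⟩ from rfl, hz]
    simp
  have e1 := D2_eq_counts ε j
  have e2 := D2_eq_counts ε (j - 1)
  rw [hstep, count_append, count_append] at e1
  simp only [count_singleton', ite_true, reduceCtorEq, ite_false] at e1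
  have hd : D2 ε (j - 1) = -1 := by omega
  rcases Nat.eq_zero_or_pos (j - 1) with h | h
  · rw [h] at hd; simp at hd
  · have := h1 (j - 1) h (by omega)
    omega

/-- The central equivalence: leading humps of order `m`, generation `n` correspond to
Dyck words of semilength `m` with `n` returns. -/
def h2Equiv (m n : ℕ) : {ε : Fin (2 * m) → Fin 2 // ε ∈ H2 m n} ≃
    {p : DyckWord // p.semilength = m ∧ p.rets = n} where
  toFun := fun x =>
    ⟨dyckOf x.1 ((mem_H2_iff x.1).mp x.2).1.1 ((mem_H2_iff x.1).mp x.2).1.2.1, by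
      constructor
      · exact dyckOf_semilength _ _ _
      · rw [← DyckWord.bal_eq_rets, ← card_D2_zero_eq_bal x.1 _ rfl]
        exact ((mem_H2_iff x.1).mp x.2).2⟩
  invFun := fun x => ⟨epsOf x.1 x.2.1, by
    obtain ⟨p, hsl, hrets⟩ := x
    rw [mem_H2_iff]
    have hw := wordOf_epsOf p hsl
    have hlen : p.toList.length = 2 * m := by rw [← hw]; simp
    have hh1 : ∀ j, 1 ≤ j → j ≤ 2 * m → 0 ≤ D2 (epsOf p hsl) j := by
      intro j hj hj'
      rw [D2_eq_counts, hw]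
      have := p.count_D_le_count_U j
      omega
    have hh2 : D2 (epsOf p hsl) (2 * m) = 0 := by
      rw [D2_eq_counts, hw, take_of_length_le (by omega)]
      have := p.count_U_eq_count_D
      omega
    refine ⟨⟨hh1, hh2, third_of_first _ hh1⟩, ?_⟩
    rw [card_D2_zero_eq_bal _ p hw, DyckWord.bal_eq_rets]
    exact hrets⟩
  left_inv := fun x => Subtype.ext (funext fun i => by
    simp only [epsOf, dyckOf_toList, wordOf, List.getElem_ofFn, Fin.eta]
    rcases fin2_cases (x.1 i) with h | h <;> simp [h])
  right_inv := fun x => Subtype.ext (DyckWord.ext (by rw [dyckOf_toList, wordOf_epsOf]))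

namespace DyckWord

instance finiteSub (m n : ℕ) : Finite {p : DyckWord // p.semilength = m ∧ p.rets = n} :=
  Finite.of_injective (fun x => (⟨x.1, x.2.1⟩ : {p : DyckWord // p.semilength = m}))
    (by rintro ⟨a, _⟩ ⟨b, _⟩ h; simpa [Subtype.ext_iff] using h)

/-- `hcount m n` is the number of Dyck words of semilength `m` with `n` returns. -/
noncomputable def hcount (m n : ℕ) : ℕ :=
  Nat.card {p : DyckWord // p.semilength = m ∧ p.rets = n}

lemma hcount_zero_ret (m : ℕ) (hm : 1 ≤ m) : hcount m 0 = 0 := by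
  have : IsEmpty {p : DyckWord // p.semilength = m ∧ p.rets = 0} := by
    constructor
    rintro ⟨p, hsl, hrets⟩
    rw [rets_eq_zero_iff] at hrets
    subst hrets
    rw [semilength_zero] at hsl
    omega
  rw [hcount, Nat.card_of_isEmpty]

lemma ne_zero_of_rets {p : DyckWord} {n : ℕ} (h : p.rets = n + 1) : p ≠ 0 := by
  intro hp
  rw [hp, rets_zero] at h
  exact absurd h (by omega)

/-- Dyck words with exactly one return are nestings. -/
def oneRetEquiv (m : ℕ) (hm : 1 ≤ m) : {p : DyckWord // p.semilength = m ∧ p.rets = 1} ≃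
    {q : DyckWord // q.semilength = m - 1} where
  toFun := fun x => ⟨x.1.insidePart, by
    obtain ⟨p, hsl, hrets⟩ := x
    have hp : p ≠ 0 := ne_zero_of_rets hrets
    have h1 := semilength_insidePart_add_semilength_outsidePart_add_one hp
    have h2 := rets_of_ne hp
    rw [hrets] at h2
    have hout : p.outsidePart = 0 := by
      rw [← rets_eq_zero_iff]; omega
    rw [hout, semilength_zero] at h1
    simp only
    omega⟩
  invFun := fun q => ⟨q.1.nest, by
    constructor
    · rw [semilength_nest, q.2]; omega
    · exact rets_nest _⟩
  left_inv := fun x => by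
    obtain ⟨p, hsl, hrets⟩ := x
    have hp : p ≠ 0 := ne_zero_of_rets hrets
    have h2 := rets_of_ne hp
    rw [hrets] at h2
    have hout : p.outsidePart = 0 := by
      rw [← rets_eq_zero_iff]; omega
    apply Subtype.ext
    simp only
    conv_rhs => rw [← nest_insidePart_add_outsidePart hp]
    rw [hout, add_zero]
  right_inv := fun q => Subtype.ext (by simp only; rw [insidePart_nest])

lemma hcount_one_ret (m : ℕ) (hm : 1 ≤ m) : hcount m 1 = catalan (m - 1) := by
  rw [hcount, Nat.card_congr (oneRetEquiv m hm), Nat.card_eq_fintype_card,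
    card_dyckWord_semilength_eq_catalan]

/-- Words whose first arch is trivial. -/
def trivArchEquiv (m n : ℕ) :
    {x : {p : DyckWord // p.semilength = m + 1 ∧ p.rets = n + 1} // x.1.insidePart = 0} ≃
    {q : DyckWord // q.semilength = m ∧ q.rets = n} where
  toFun := fun x => ⟨x.1.1.outsidePart, by
    obtain ⟨⟨p, hsl, hrets⟩, hin⟩ := x
    have hp : p ≠ 0 := ne_zero_of_rets hrets
    have h1 := semilength_insidePart_add_semilength_outsidePart_add_one hp
    have h2 := rets_of_ne hp
    simp only at hin ⊢
    rw [hin, semilength_zero] at h1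
    constructor
    · omega
    · omega⟩
  invFun := fun q => ⟨⟨(0 : DyckWord).nest + q.1, by
      constructor
      · rw [semilength_add, semilength_nest, semilength_zero, q.2.1]
        omega
      · rw [rets_nest_add, q.2.2]⟩, by
    simp only
    rw [insidePart_add nest_ne_zero, insidePart_nest]⟩
  left_inv := fun x => by
    obtain ⟨⟨p, hsl, hrets⟩, hin⟩ := x
    have hp : p ≠ 0 := ne_zero_of_rets hrets
    apply Subtype.ext
    apply Subtype.ext
    simp only at hin ⊢
    conv_rhs => rw [← nest_insidePart_add_outsidePart hp, hin]
  right_inv := fun q => Subtype.ext (by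
    simp only
    rw [outsidePart_add nest_ne_zero, outsidePart_nest, zero_add])

/-- Words whose first arch is nontrivial, versus words with one more return. -/
def nontrivArchEquiv (m n : ℕ) :
    {x : {p : DyckWord // p.semilength = m + 1 ∧ p.rets = n + 1} // ¬x.1.insidePart = 0} ≃
    {v : DyckWord // v.semilength = m + 1 ∧ v.rets = n + 2} where
  toFun := fun x => ⟨x.1.1.insidePart.insidePart.nest +
      (x.1.1.insidePart.outsidePart.nest + x.1.1.outsidePart), by
    obtain ⟨⟨p, hsl, hrets⟩, hin⟩ := x
    have hp : p ≠ 0 := ne_zero_of_rets hrets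
    simp only at hin ⊢
    have h1 := semilength_insidePart_add_semilength_outsidePart_add_one hp
    have h2 := semilength_insidePart_add_semilength_outsidePart_add_one hin
    have h3 := rets_of_ne hp
    constructor
    · rw [semilength_add, semilength_add, semilength_nest, semilength_nest]
      omega
    · rw [rets_nest_add, rets_nest_add]
      omega⟩
  invFun := fun v => by
    refine ⟨⟨((v.1.insidePart.nest + v.1.outsidePart.insidePart).nest +
        v.1.outsidePart.outsidePart), ?_, ?_⟩, ?_⟩
    · obtain ⟨w, hsl, hrets⟩ := v
      have hw : w ≠ 0 := ne_zero_of_rets hrets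
      have hwo : w.outsidePart ≠ 0 := by
        have h2 := rets_of_ne hw
        intro hc
        rw [hc, rets_zero] at h2
        omega
      have h1 := semilength_insidePart_add_semilength_outsidePart_add_one hw
      have h2 := semilength_insidePart_add_semilength_outsidePart_add_one hwo
      simp only
      rw [semilength_add, semilength_nest, semilength_add, semilength_nest]
      omega
    · obtain ⟨w, hsl, hrets⟩ := v
      have hw : w ≠ 0 := ne_zero_of_rets hrets
      have hwo : w.outsidePart ≠ 0 := by
        have h2 := rets_of_ne hw
        intro hc
        rw [hc, rets_zero] at h2
        omega
      have h2 := rets_of_ne hw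
      have h3 := rets_of_ne hwo
      simp only
      rw [rets_nest_add]
      omega
    · simp only
      rw [insidePart_add nest_ne_zero, insidePart_nest]
      intro hc
      rw [add_eq_zero'] at hc
      exact nest_ne_zero hc.1
  left_inv := fun x => by
    obtain ⟨⟨p, hsl, hrets⟩, hin⟩ := x
    have hp : p ≠ 0 := ne_zero_of_rets hrets
    apply Subtype.ext
    apply Subtype.ext
    simp only at hin ⊢
    rw [insidePart_add nest_ne_zero, insidePart_nest,
      outsidePart_add nest_ne_zero, outsidePart_nest, zero_add,
      insidePart_add nest_ne_zero, insidePart_nest,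
      outsidePart_add nest_ne_zero, outsidePart_nest, zero_add,
      nest_insidePart_add_outsidePart hin, nest_insidePart_add_outsidePart hp]
  right_inv := fun v => by
    obtain ⟨w, hsl, hrets⟩ := v
    have hw : w ≠ 0 := ne_zero_of_rets hrets
    have hwo : w.outsidePart ≠ 0 := by
      have h2 := rets_of_ne hw
      intro hc
      rw [hc, rets_zero] at h2
      omega
    apply Subtype.ext
    simp only
    rw [insidePart_add nest_ne_zero, insidePart_nest,
      outsidePart_add nest_ne_zero, outsidePart_nest, zero_add,
      insidePart_add nest_ne_zero, insidePart_nest,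
      outsidePart_add nest_ne_zero, outsidePart_nest, zero_add,
      nest_insidePart_add_outsidePart hwo, nest_insidePart_add_outsidePart hw]

lemma hcount_rec (m n : ℕ) : hcount (m + 1) (n + 1) = hcount m n + hcount (m + 1) (n + 2) := by
  classical
  have e : {p : DyckWord // p.semilength = m + 1 ∧ p.rets = n + 1} ≃
      {q : DyckWord // q.semilength = m ∧ q.rets = n} ⊕
      {v : DyckWord // v.semilength = m + 1 ∧ v.rets = n + 2} :=
    ((Equiv.sumCompl fun x : {p : DyckWord // p.semilength = m + 1 ∧ p.rets = n + 1} =>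
      x.1.insidePart = 0).symm).trans
      (Equiv.sumCongr (trivArchEquiv m n) (nontrivArchEquiv m n))
  rw [hcount, Nat.card_congr e, Nat.card_sum, hcount, hcount]

end DyckWord

/-- The alternating sum on the right-hand side. -/
def gsum (m n : ℕ) : ℤ :=
  ∑ i ∈ Finset.range m, (-1 : ℤ) ^ i * (Nat.choose (n - i - 1) i) * (catalan (m - i - 1))

lemma gsum_one (m : ℕ) (hm : 1 ≤ m) : gsum m 1 = catalan (m - 1) := by
  rw [gsum, Finset.sum_eq_single 0]
  · simp
  · intro b _ hb
    have h : 1 - b - 1 = 0 := by omega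
    rw [h]
    obtain ⟨b', rfl⟩ : ∃ b', b = b' + 1 := ⟨b - 1, by omega⟩
    simp
  · intro h
    exact absurd (Finset.mem_range.mpr (by omega)) h

lemma gsum_two (m : ℕ) : gsum m 2 = gsum m 1 := by
  rw [gsum, gsum]
  apply Finset.sum_congr rfl
  intro i _
  match i with
  | 0 => norm_num
  | (j + 1) =>
    have h1 : 2 - (j + 1) - 1 = 0 := by omega
    have h2 : 1 - (j + 1) - 1 = 0 := by omega
    rw [h1, h2]

lemma gsum_rec (m k : ℕ) :
    gsum (m + 1) (k + 2) = gsum (m + 1) (k + 3) + gsum m (k + 1) := by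
  rw [gsum, gsum, gsum, Finset.sum_range_succ', Finset.sum_range_succ']
  have h0 : ∀ j ∈ Finset.range m,
      (-1 : ℤ) ^ (j + 1) * (Nat.choose (k + 2 - (j + 1) - 1) (j + 1)) *
        (catalan (m + 1 - (j + 1) - 1)) =
      (-1 : ℤ) ^ (j + 1) * (Nat.choose (k + 3 - (j + 1) - 1) (j + 1)) *
        (catalan (m + 1 - (j + 1) - 1)) +
      (-1 : ℤ) ^ j * (Nat.choose (k + 1 - j - 1) j) * (catalan (m - j - 1)) := by
    intro j _
    have e1 : k + 2 - (j + 1) - 1 = k - j := by omega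
    have e2 : k + 3 - (j + 1) - 1 = k + 1 - j := by omega
    have e3 : k + 1 - j - 1 = k - j := by omega
    have e4 : m + 1 - (j + 1) - 1 = m - j - 1 := by omega
    rw [e1, e2, e3, e4]
    have hch : (Nat.choose (k + 1 - j) (j + 1) : ℤ) =
        (Nat.choose (k - j) (j + 1) : ℤ) + (Nat.choose (k - j) j : ℤ) := by
      rcases le_or_gt j k with h | h
      · have : k + 1 - j = (k - j) + 1 := by omega
        rw [this, Nat.choose_succ_succ]
        push_cast
        ring
      · have h1 : k + 1 - j = 0 := by omega
        have h2 : k - j = 0 := by omega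
        obtain ⟨j', rfl⟩ : ∃ j', j = j' + 1 := ⟨j - 1, by omega⟩
        rw [h1, h2]
        simp
    rw [hch]
    ring
  rw [Finset.sum_congr rfl h0, Finset.sum_add_distrib]
  simp only [Nat.choose_zero_right, Nat.cast_one]
  ring

lemma hcount_eq_gsum : ∀ m n : ℕ, 1 ≤ n → n ≤ m → ((DyckWord.hcount m n : ℤ) = gsum m n) := by
  intro m
  induction m using Nat.strong_induction_on with
  | _ m ihm =>
    intro n hn
    induction n, hn using Nat.le_induction with
    | base =>
      intro hm
      rw [DyckWord.hcount_one_ret m hm, gsum_one m hm]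
    | succ n hn ihn =>
      intro hnm
      obtain ⟨m', rfl⟩ : ∃ m', m = m' + 1 := ⟨m - 1, by omega⟩
      obtain ⟨n'', rfl⟩ : ∃ n'', n = n'' + 1 := ⟨n - 1, by omega⟩
      have hrec := congrArg (Nat.cast : ℕ → ℤ) (DyckWord.hcount_rec m' n'')
      push_cast at hrec
      rcases Nat.eq_zero_or_pos n'' with rfl | hpos
      · -- n + 1 = 2
        have hz := DyckWord.hcount_zero_ret m' (by omega)
        rw [hz] at hrec
        have h1 : (DyckWord.hcount (m' + 1) 1 : ℤ) = gsum (m' + 1) 1 :=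
          ihn (by omega)
        rw [gsum_two]
        push_cast at hrec
        norm_num at hrec h1 ⊢
        omega
      · obtain ⟨k, rfl⟩ : ∃ k, n'' = k + 1 := ⟨n'' - 1, by omega⟩
        have h1 : (DyckWord.hcount (m' + 1) (k + 2) : ℤ) = gsum (m' + 1) (k + 2) :=
          ihn (by omega)
        have h2 : (DyckWord.hcount m' (k + 1) : ℤ) = gsum m' (k + 1) :=
          ihm m' (by omega) (k + 1) (by omega) (by omega)
        have h3 := gsum_rec m' k
        have ea : k + 1 + 1 + 1 = k + 3 := by omega
        have eb : k + 1 + 1 = k + 2 := by omega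
        have ec : k + 1 + 2 = k + 3 := by omega
        simp only [ea, eb, ec] at hrec h1 h2 h3 ⊢
        omega

/-- For all `m ≥ n ≥ 1`,
`card(Ĥ²_{m,n}) = ∑_{i=0}^{m−1} (−1)^i binom(n−i−1, i) C_{m−i−1}`
(where `binom(a,b) = 0` if `b > a` or `a < 0`; here natural subtraction
realizes this convention). -/
theorem card_H2_formula (m n : ℕ) (hn : 1 ≤ n) (hnm : n ≤ m) :
    ((H2 m n).card : ℤ) =
      ∑ i ∈ Finset.range m,
        (-1 : ℤ) ^ i * (Nat.choose (n - i - 1) i) * (catalan (m - i - 1)) := by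
  have h1 : (H2 m n).card = DyckWord.hcount m n := by
    rw [← Nat.card_eq_finsetCard, DyckWord.hcount]
    exact Nat.card_congr (h2Equiv m n)
  rw [h1, hcount_eq_gsum m n hn hnm]
  rfl
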